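/- Let (Ω, 𝒜, P) be a probability space with a filtration (ℱ_s)_{s ∈ [0,t]} for some t > 0, let (E, ρ) be a metric space with Borel σ-algebra ℰ and a σ-finite measure m, and let X = (X_s)_{s ∈ [0,t]} be an (ℱ_s)-adapted E-valued process with continuous sample paths and X_0 = x P-a.s. for a fixed x ∈ E. Let p : (0,∞) × E × E → [0,∞) be jointly measurable and fix z ∈ E with 0 < p(t,x,z) < ∞. Assume: (i) for all 0 ≤ s ≤ u < t, every nonnegative measurable g : E → [0,∞] and every A ∈ ℱ_s, ∫_A g(X_u) dP = ∫_A (∫_E g(y) p(u−s, X_s, y) m(dy)) dP; (ii) for all v, w > 0 and all x′, z′ ∈ E, ∫_E p(v, x′, y) p(w, y, z′) m(dy) = p(v+w, x′, z′); (iii) for P-a.e. ω the map s ↦ M_s(ω) := p(t−s, X_s(ω), z) is right-continuous with left limits on [0,t); (iv) for every r > 0, lim_{u → t⁻} ∫_{{y ∈ E : ρ(y,z) ≥ r}} p(t−u, y, z) p(u, x, y) m(dy) = 0; (v) P(X_t = z) = 0. Then the limit M_t := lim_{s → t⁻} M_s exists P-a.s. and M_t = 0 P-a.s.; moreover, setting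 M_t := 0, the process (M_s)_{s ∈ [0,t]} is a supermartingale with respect to (ℱ_s) under P. -/

import Mathlib

open MeasureTheory Filter
open scoped ENNReal

/-- second part of Lemma B.1: under the Markov property with transition
density `p` w.r.t. a σ-finite measure `m`, Chapman–Kolmogorov, a.s. càdlàg paths of
`M_s = p(t-s, X_s, z)` on `[0,t)`, the duality-type condition (iv), and `P(X_t = z) = 0`,
the limit `M_t = lim_{s→t⁻} M_s` exists and equals `0` a.s., and setting `M_t := 0`
the process `(M_s)_{s ∈ [0,t]}` is an `(ℱ_s)`-supermartingale. -/
theorem stmt8 {Ω : Type*} {mΩ : MeasurableSpace Ω} (P : Measure Ω) [IsProbabilityMeasure P]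
    (t : ℝ) (ht : 0 < t) (ℱ : Filtration ℝ mΩ)
    {E : Type*} [MetricSpace E] [MeasurableSpace E] [BorelSpace E]
    (m : Measure E) [SigmaFinite m]
    (X : ℝ → Ω → E)
    (hX_meas : ∀ s : ℝ, 0 ≤ s → s ≤ t → Measurable[ℱ s] (X s))
    (hX_cont : ∀ ω, ContinuousOn (fun s => X s ω) (Set.Icc 0 t))
    (x : E) (hx : ∀ᵐ ω ∂P, X 0 ω = x)
    (p : ℝ → E → E → ℝ)
    (hp_meas : Measurable (fun q : ℝ × E × E => p q.1 q.2.1 q.2.2))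
    (hp_nonneg : ∀ (v : ℝ) (x' z' : E), 0 < v → 0 ≤ p v x' z')
    (z : E) (hz_pos : 0 < p t x z)
    (hMarkov : ∀ s u : ℝ, 0 ≤ s → s ≤ u → u < t → ∀ g : E → ℝ≥0∞, Measurable g →
      ∀ A : Set Ω, MeasurableSet[ℱ s] A →
        ∫⁻ ω in A, g (X u ω) ∂P
          = ∫⁻ ω in A, ∫⁻ y, g y * ENNReal.ofReal (p (u - s) (X s ω) y) ∂m ∂P)
    (hCK : ∀ v w : ℝ, 0 < v → 0 < w → ∀ x' z' : E,
      ∫⁻ y, ENNReal.ofReal (p v x' y) * ENNReal.ofReal (p w y z') ∂m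
        = ENNReal.ofReal (p (v + w) x' z'))
    (hcadlag : ∀ᵐ ω ∂P,
      (∀ s ∈ Set.Ico (0:ℝ) t,
        Tendsto (fun u => p (t - u) (X u ω) z) (nhdsWithin s (Set.Ici s))
          (nhds (p (t - s) (X s ω) z))) ∧
      (∀ s ∈ Set.Ioo (0:ℝ) t, ∃ l : ℝ,
        Tendsto (fun u => p (t - u) (X u ω) z) (nhdsWithin s (Set.Iio s)) (nhds l)))
    (hdual : ∀ r : ℝ, 0 < r →
      Tendsto (fun u => ∫⁻ y in {y : E | r ≤ dist y z},
          ENNReal.ofReal (p (t - u) y z) * ENNReal.ofReal (p u x y) ∂m)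
        (nhdsWithin t (Set.Iio t)) (nhds 0))
    (hXt : P {ω | X t ω = z} = 0) :
    (∀ᵐ ω ∂P,
      Tendsto (fun s => p (t - s) (X s ω) z) (nhdsWithin t (Set.Iio t)) (nhds 0)) ∧
    (∀ s : ℝ, 0 ≤ s → s ≤ t →
      Integrable (fun ω => if s < t then p (t - s) (X s ω) z else 0) P) ∧
    (∀ s u : ℝ, 0 ≤ s → s ≤ u → u ≤ t →
      P[(fun ω => if u < t then p (t - u) (X u ω) z else 0)|ℱ s]
        ≤ᵐ[P] fun ω => if s < t then p (t - s) (X s ω) z else 0) := by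
  classical
  -- measurability of M_s = p (t-s) (X s ·) z with respect to ℱ s
  have hM_meas : ∀ s : ℝ, 0 ≤ s → s ≤ t →
      Measurable[ℱ s] (fun ω => p (t - s) (X s ω) z) := by
    intro s hs hst
    exact hp_meas.comp (measurable_const.prodMk ((hX_meas s hs hst).prodMk measurable_const))
  have hM_measΩ : ∀ s : ℝ, 0 ≤ s → s ≤ t →
      Measurable (fun ω => p (t - s) (X s ω) z) := fun s hs hst =>
    (hM_meas s hs hst).mono (ℱ.le s) le_rfl
  have hφ_meas : ∀ s : ℝ, 0 ≤ s → s ≤ t →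
      Measurable[ℱ s] (fun ω => ENNReal.ofReal (p (t - s) (X s ω) z)) := fun s hs hst =>
    (hM_meas s hs hst).ennreal_ofReal
  have hφ_measΩ : ∀ s : ℝ, 0 ≤ s → s ≤ t →
      Measurable (fun ω => ENNReal.ofReal (p (t - s) (X s ω) z)) := fun s hs hst =>
    (hM_measΩ s hs hst).ennreal_ofReal
  -- Key martingale identity (set-lintegral form)
  have hK : ∀ w u : ℝ, 0 ≤ w → w ≤ u → u < t → ∀ A : Set Ω, MeasurableSet[ℱ w] A →
      ∫⁻ ω in A, ENNReal.ofReal (p (t - u) (X u ω) z) ∂P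
        = ∫⁻ ω in A, ENNReal.ofReal (p (t - w) (X w ω) z) ∂P := by
    intro w u hw hwu hut A hA
    rcases eq_or_lt_of_le hwu with rfl | hlt
    · rfl
    · have hg : Measurable (fun y => ENNReal.ofReal (p (t - u) y z)) :=
        (hp_meas.comp (measurable_const.prodMk (measurable_id.prodMk
          measurable_const))).ennreal_ofReal
      have h1 := hMarkov w u hw hwu hut _ hg A hA
      have h2 : ∀ x' : E,
          (∫⁻ y, ENNReal.ofReal (p (t - u) y z) * ENNReal.ofReal (p (u - w) x' y) ∂m)
            = ENNReal.ofReal (p (t - w) x' z) := by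
        intro x'
        calc ∫⁻ y, ENNReal.ofReal (p (t - u) y z) * ENNReal.ofReal (p (u - w) x' y) ∂m
            = ∫⁻ y, ENNReal.ofReal (p (u - w) x' y) * ENNReal.ofReal (p (t - u) y z) ∂m := by
              simp_rw [mul_comm]
          _ = ENNReal.ofReal (p (u - w + (t - u)) x' z) :=
              hCK (u - w) (t - u) (by linarith) (by linarith) x' z
          _ = ENNReal.ofReal (p (t - w) x' z) := by rw [show u - w + (t - u) = t - w by ring]
      calc ∫⁻ ω in A, ENNReal.ofReal (p (t - u) (X u ω) z) ∂P
          = ∫⁻ ω in A, ∫⁻ y, ENNReal.ofReal (p (t - u) y z)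
              * ENNReal.ofReal (p (u - w) (X w ω) y) ∂m ∂P := h1
        _ = ∫⁻ ω in A, ENNReal.ofReal (p (t - w) (X w ω) z) ∂P :=
            lintegral_congr fun ω => h2 (X w ω)
  -- total mass
  have hE : ∀ u : ℝ, 0 ≤ u → u < t →
      ∫⁻ ω, ENNReal.ofReal (p (t - u) (X u ω) z) ∂P = ENNReal.ofReal (p t x z) := by
    intro u hu hut
    have h1 := hK 0 u le_rfl hu hut Set.univ MeasurableSet.univ
    rw [setLIntegral_univ, setLIntegral_univ] at h1
    rw [h1]
    have h2 : ∀ᵐ ω ∂P, ENNReal.ofReal (p (t - 0) (X 0 ω) z) = ENNReal.ofReal (p t x z) := by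
      filter_upwards [hx] with ω hω
      rw [hω, sub_zero]
    rw [lintegral_congr_ae h2, lintegral_const, measure_univ, mul_one]
  -- dual identity
  have hD : ∀ w : ℝ, 0 < w → w < t → ∀ r : ℝ,
      ∫⁻ ω in {ω | r ≤ dist (X w ω) z}, ENNReal.ofReal (p (t - w) (X w ω) z) ∂P
        = ∫⁻ y in {y : E | r ≤ dist y z},
            ENNReal.ofReal (p (t - w) y z) * ENNReal.ofReal (p w x y) ∂m := by
    intro w hw hwt r
    have hSr : MeasurableSet {y : E | r ≤ dist y z} :=
      (isClosed_le continuous_const (continuous_id.dist continuous_const)).measurableSet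
    have hpm : Measurable (fun y => ENNReal.ofReal (p (t - w) y z)) :=
      (hp_meas.comp (measurable_const.prodMk (measurable_id.prodMk
        measurable_const))).ennreal_ofReal
    have hgmeas : Measurable ({y : E | r ≤ dist y z}.indicator
        (fun y => ENNReal.ofReal (p (t - w) y z))) := hpm.indicator hSr
    have h1 := hMarkov 0 w le_rfl hw.le hwt _ hgmeas Set.univ MeasurableSet.univ
    rw [setLIntegral_univ, setLIntegral_univ] at h1
    have hXmeasset : MeasurableSet {ω | r ≤ dist (X w ω) z} :=
      ((hX_meas w hw.le hwt.le).mono (ℱ.le w) le_rfl) hSr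
    have hL : (∫⁻ ω, {y : E | r ≤ dist y z}.indicator
          (fun y => ENNReal.ofReal (p (t - w) y z)) (X w ω) ∂P)
        = ∫⁻ ω in {ω | r ≤ dist (X w ω) z}, ENNReal.ofReal (p (t - w) (X w ω) z) ∂P := by
      rw [← lintegral_indicator hXmeasset]
      refine lintegral_congr fun ω => ?_
      by_cases hmem : r ≤ dist (X w ω) z
      · rw [Set.indicator_of_mem (show X w ω ∈ {y : E | r ≤ dist y z} from hmem),
          Set.indicator_of_mem (show ω ∈ {ω | r ≤ dist (X w ω) z} from hmem)]
      · rw [Set.indicator_of_notMem (show X w ω ∉ {y : E | r ≤ dist y z} from hmem),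
          Set.indicator_of_notMem (show ω ∉ {ω | r ≤ dist (X w ω) z} from hmem)]
    have hR : (∫⁻ ω, ∫⁻ y, {y : E | r ≤ dist y z}.indicator
          (fun y => ENNReal.ofReal (p (t - w) y z)) y
          * ENNReal.ofReal (p (w - 0) (X 0 ω) y) ∂m ∂P)
        = ∫⁻ y in {y : E | r ≤ dist y z},
            ENNReal.ofReal (p (t - w) y z) * ENNReal.ofReal (p w x y) ∂m := by
      have hae : ∀ᵐ ω ∂P, (∫⁻ y, {y : E | r ≤ dist y z}.indicator
            (fun y => ENNReal.ofReal (p (t - w) y z)) y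
            * ENNReal.ofReal (p (w - 0) (X 0 ω) y) ∂m)
          = ∫⁻ y in {y : E | r ≤ dist y z},
              ENNReal.ofReal (p (t - w) y z) * ENNReal.ofReal (p w x y) ∂m := by
        filter_upwards [hx] with ω hω
        rw [hω, sub_zero, ← lintegral_indicator hSr]
        refine lintegral_congr fun y => ?_
        by_cases hy : y ∈ {y : E | r ≤ dist y z}
        · rw [Set.indicator_of_mem hy, Set.indicator_of_mem hy]
        · rw [Set.indicator_of_notMem hy, Set.indicator_of_notMem hy, zero_mul]
      rw [lintegral_congr_ae hae, lintegral_const, measure_univ, mul_one]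
    rw [← hL, h1, hR]
  -- integrability
  have hMint : ∀ s : ℝ, 0 ≤ s → s < t → Integrable (fun ω => p (t - s) (X s ω) z) P := by
    intro s hs hst
    refine ⟨(hM_measΩ s hs hst.le).aestronglyMeasurable, ?_⟩
    rw [hasFiniteIntegral_iff_ofReal
      (Eventually.of_forall fun ω => hp_nonneg _ _ _ (by linarith))]
    rw [hE s hs hst]
    exact ENNReal.ofReal_lt_top
  -- martingale property (conditional expectation form)
  have hmart : ∀ s u : ℝ, 0 ≤ s → s ≤ u → u < t →
      (fun ω => p (t - s) (X s ω) z) =ᵐ[P] P[(fun ω => p (t - u) (X u ω) z)|ℱ s] := by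
    intro s u hs hsu hut
    have hst : s < t := lt_of_le_of_lt hsu hut
    refine ae_eq_condExp_of_forall_setIntegral_eq (ℱ.le s) (hMint u (hs.trans hsu) hut)
      (fun A hA hμ => (hMint s hs hst).integrableOn) (fun A hA hμ => ?_)
      (StronglyMeasurable.aestronglyMeasurable
        (Measurable.stronglyMeasurable (hM_meas s hs hst.le)))
    have hKu := hK s u hs hsu hut A hA
    rw [integral_eq_lintegral_of_nonneg_ae
        (Eventually.of_forall fun ω => hp_nonneg _ _ _ (by linarith))
        ((hM_measΩ s hs hst.le).aestronglyMeasurable.restrict),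
      integral_eq_lintegral_of_nonneg_ae
        (Eventually.of_forall fun ω => hp_nonneg _ _ _ (by linarith))
        ((hM_measΩ u (hs.trans hsu) hut.le).aestronglyMeasurable.restrict),
      hKu]
  refine ⟨?_, ?_, ?_⟩
  · -- a.s. convergence of M_s to 0 as s → t⁻
    have hXt' : ∀ᵐ ω ∂P, X t ω ≠ z := by
      rw [ae_iff]
      simpa [not_not] using hXt
    set Z : ℕ → ℕ → ℚ → Set Ω := fun j k v =>
      {ω | 0 < (v:ℝ) ∧ (v:ℝ) < t ∧
        (∀ u ∈ Set.Icc (v:ℝ) t, 1/((k:ℝ)+1) ≤ dist (X u ω) z) ∧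
        (∀ w : ℚ, (v:ℝ) < (w:ℝ) → (w:ℝ) < t → ∃ s : ℚ, (w:ℝ) ≤ (s:ℝ) ∧ (s:ℝ) < t ∧
          1/((j:ℝ)+1) ≤ p (t - (s:ℝ)) (X (s:ℝ) ω) z)} with hZdef
    have hZnull : ∀ (j k : ℕ) (v : ℚ), P (Z j k v) = 0 := by
      intro j k v
      by_cases hv : 0 < (v:ℝ) ∧ (v:ℝ) < t
      swap
      · have hempty : Z j k v = ∅ := by
          ext ω
          simp only [hZdef, Set.mem_setOf_eq, Set.mem_empty_iff_false, iff_false, not_and]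
          intro h1 h2
          exact absurd ⟨h1, h2⟩ hv
        rw [hempty, measure_empty]
      obtain ⟨hv0, hvt⟩ := hv
      have hrpos : (0:ℝ) < 1/((k:ℝ)+1) := by positivity
      have hεrpos : (0:ℝ) < 1/((j:ℝ)+1) := by positivity
      have hε0 : ENNReal.ofReal (1/((j:ℝ)+1)) ≠ 0 := by
        simp only [ne_eq, ENNReal.ofReal_eq_zero, not_le]
        exact hεrpos
      set C : ℝ → Set Ω := fun s =>
        {ω | ∀ q : ℚ, (v:ℝ) ≤ (q:ℝ) → (q:ℝ) ≤ s → 1/((k:ℝ)+1) ≤ dist (X (q:ℝ) ω) z} with hCdef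
      set ψ : ℝ → Ω → ℝ≥0∞ := fun s =>
        (C s).indicator (fun ω => ENNReal.ofReal (p (t - s) (X s ω) z)) with hψdef
      have hC_meas : ∀ s : ℝ, (v:ℝ) ≤ s → s ≤ t → MeasurableSet[ℱ s] (C s) := by
        intro s h1 h2
        have hCi : C s = ⋂ (q : ℚ),
            {ω | (v:ℝ) ≤ (q:ℝ) → (q:ℝ) ≤ s → 1/((k:ℝ)+1) ≤ dist (X (q:ℝ) ω) z} := by
          ext ω
          simp only [hCdef, Set.mem_setOf_eq, Set.mem_iInter]
        rw [hCi]
        refine MeasurableSet.iInter fun q => ?_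
        by_cases hq : (v:ℝ) ≤ (q:ℝ) ∧ (q:ℝ) ≤ s
        · have hset : {ω | (v:ℝ) ≤ (q:ℝ) → (q:ℝ) ≤ s → 1/((k:ℝ)+1) ≤ dist (X (q:ℝ) ω) z}
              = X (q:ℝ) ⁻¹' {y | 1/((k:ℝ)+1) ≤ dist y z} := by
            ext ω
            simp [hq.1, hq.2]
          rw [hset]
          exact (ℱ.mono hq.2) _ ((hX_meas (q:ℝ) (le_trans hv0.le hq.1) (le_trans hq.2 h2))
            ((isClosed_le continuous_const (continuous_id.dist continuous_const)).measurableSet))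
        · have hset : {ω | (v:ℝ) ≤ (q:ℝ) → (q:ℝ) ≤ s → 1/((k:ℝ)+1) ≤ dist (X (q:ℝ) ω) z}
              = Set.univ := by
            ext ω
            simp only [Set.mem_setOf_eq, Set.mem_univ, iff_true]
            intro hh1 hh2
            exact absurd ⟨hh1, hh2⟩ hq
          rw [hset]
          exact MeasurableSet.univ
      have hC_measΩ : ∀ s : ℝ, (v:ℝ) ≤ s → s ≤ t → MeasurableSet (C s) := fun s h1 h2 =>
        (ℱ.le s) _ (hC_meas s h1 h2)
      have hψ_meas : ∀ s : ℝ, (v:ℝ) ≤ s → s ≤ t → Measurable[ℱ s] (ψ s) := by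
        intro s h1 h2
        simp only [hψdef]
        exact (hφ_meas s (le_trans hv0.le h1) h2).indicator (hC_meas s h1 h2)
      have hψ_measΩ : ∀ s : ℝ, (v:ℝ) ≤ s → s ≤ t → Measurable (ψ s) := fun s h1 h2 =>
        (hψ_meas s h1 h2).mono (ℱ.le s) le_rfl
      have hC_anti : ∀ w u : ℝ, w ≤ u → C u ⊆ C w := fun w u h ω hω q hq1 hq2 =>
        hω q hq1 (le_trans hq2 h)
      have hψint : ∀ s : ℝ, (v:ℝ) ≤ s → s ≤ t → ∀ B : Set Ω,
          ∫⁻ ω in B, ψ s ω ∂P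
            = ∫⁻ ω in C s ∩ B, ENNReal.ofReal (p (t - s) (X s ω) z) ∂P := by
        intro s h1 h2 B
        simp only [hψdef]
        rw [lintegral_indicator (hC_measΩ s h1 h2),
          Measure.restrict_restrict (hC_measΩ s h1 h2)]
      have hsuper : ∀ w u : ℝ, (v:ℝ) ≤ w → w ≤ u → u < t → ∀ B : Set Ω,
          MeasurableSet[ℱ w] B →
          ∫⁻ ω in B, ψ u ω ∂P ≤ ∫⁻ ω in B, ψ w ω ∂P := by
        intro w u hvw hwu hut B hB
        have hw0 : 0 ≤ w := le_trans hv0.le hvw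
        rw [hψint u (le_trans hvw hwu) hut.le B, hψint w hvw (le_trans hwu hut.le) B]
        calc ∫⁻ ω in C u ∩ B, ENNReal.ofReal (p (t - u) (X u ω) z) ∂P
            ≤ ∫⁻ ω in C w ∩ B, ENNReal.ofReal (p (t - u) (X u ω) z) ∂P :=
              lintegral_mono_set (Set.inter_subset_inter_left B (hC_anti w u hwu))
          _ = ∫⁻ ω in C w ∩ B, ENNReal.ofReal (p (t - w) (X w ω) z) ∂P :=
              hK w u hw0 hwu hut _ ((hC_meas w hvw (le_trans hwu hut.le)).inter hB)
      have hbound : ∀ q0 : ℚ, (v:ℝ) ≤ (q0:ℝ) → (q0:ℝ) < t →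
          ∫⁻ ω, ψ (q0:ℝ) ω ∂P
            ≤ ∫⁻ y in {y : E | 1/((k:ℝ)+1) ≤ dist y z},
                ENNReal.ofReal (p (t - (q0:ℝ)) y z) * ENNReal.ofReal (p (q0:ℝ) x y) ∂m := by
        intro q0 h1 h2
        have h0q : 0 < (q0:ℝ) := lt_of_lt_of_le hv0 h1
        have hint := hψint (q0:ℝ) h1 h2.le Set.univ
        rw [setLIntegral_univ, Set.inter_univ] at hint
        rw [hint]
        refine le_trans (lintegral_mono_set fun ω hω => hω q0 h1 le_rfl) ?_
        exact le_of_eq (hD (q0:ℝ) h0q h2 (1/((k:ℝ)+1)))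
      have hL : ∀ S : Finset ℚ, ∀ w : ℝ, (v:ℝ) ≤ w → w < t → ∀ B : Set Ω,
          MeasurableSet[ℱ w] B →
          ENNReal.ofReal (1/((j:ℝ)+1))
              * P (B ∩ {ω | ∃ q ∈ S, w ≤ (q:ℝ) ∧ (q:ℝ) < t
                  ∧ ENNReal.ofReal (1/((j:ℝ)+1)) ≤ ψ (q:ℝ) ω})
            ≤ ∫⁻ ω in B, ψ w ω ∂P := by
        intro S
        induction S using Finset.induction_on_min with
        | empty =>
          intro w hvw hwt B hB
          simp
        | insert a S ha IH =>
          intro w hvw hwt B hB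
          by_cases haw : w ≤ (a:ℝ) ∧ (a:ℝ) < t
          · obtain ⟨haw1, haw2⟩ := haw
            have hva : (v:ℝ) ≤ (a:ℝ) := le_trans hvw haw1
            have hψaΩ : Measurable (ψ (a:ℝ)) := hψ_measΩ _ hva haw2.le
            have hsetm : MeasurableSet {ω | ENNReal.ofReal (1/((j:ℝ)+1)) ≤ ψ (a:ℝ) ω} :=
              measurableSet_le measurable_const hψaΩ
            have hsplit : B ∩ {ω | ∃ q ∈ insert a S, w ≤ (q:ℝ) ∧ (q:ℝ) < t
                  ∧ ENNReal.ofReal (1/((j:ℝ)+1)) ≤ ψ (q:ℝ) ω}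
                ⊆ (B ∩ {ω | ENNReal.ofReal (1/((j:ℝ)+1)) ≤ ψ (a:ℝ) ω}) ∪
                  ((B ∩ {ω | ENNReal.ofReal (1/((j:ℝ)+1)) ≤ ψ (a:ℝ) ω}ᶜ)
                    ∩ {ω | ∃ q ∈ S, (a:ℝ) ≤ (q:ℝ) ∧ (q:ℝ) < t
                        ∧ ENNReal.ofReal (1/((j:ℝ)+1)) ≤ ψ (q:ℝ) ω}) := by
              rintro ω ⟨hωB, q, hqmem, hq1, hq2, hq3⟩
              by_cases hψa : ENNReal.ofReal (1/((j:ℝ)+1)) ≤ ψ (a:ℝ) ω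
              · exact Or.inl ⟨hωB, hψa⟩
              · rcases Finset.mem_insert.mp hqmem with rfl | hqS
                · exact absurd hq3 hψa
                · exact Or.inr ⟨⟨hωB, hψa⟩, q, hqS,
                    (by exact_mod_cast (ha q hqS).le), hq2, hq3⟩
            have h1 : ENNReal.ofReal (1/((j:ℝ)+1))
                  * P (B ∩ {ω | ENNReal.ofReal (1/((j:ℝ)+1)) ≤ ψ (a:ℝ) ω})
                ≤ ∫⁻ ω in B ∩ {ω | ENNReal.ofReal (1/((j:ℝ)+1)) ≤ ψ (a:ℝ) ω},
                    ψ (a:ℝ) ω ∂P := by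
              have h := mul_meas_ge_le_lintegral₀
                (μ := P.restrict (B ∩ {ω | ENNReal.ofReal (1/((j:ℝ)+1)) ≤ ψ (a:ℝ) ω}))
                hψaΩ.aemeasurable (ENNReal.ofReal (1/((j:ℝ)+1)))
              rwa [Measure.restrict_apply hsetm,
                Set.inter_eq_self_of_subset_right Set.inter_subset_right] at h
            have hB'meas : MeasurableSet[ℱ (a:ℝ)]
                (B ∩ {ω | ENNReal.ofReal (1/((j:ℝ)+1)) ≤ ψ (a:ℝ) ω}ᶜ) :=
              ((ℱ.mono haw1) _ hB).inter
                (measurableSet_le measurable_const (hψ_meas _ hva haw2.le)).compl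
            have h2 := IH (a:ℝ) hva haw2 _ hB'meas
            have hdisj : Disjoint (B ∩ {ω | ENNReal.ofReal (1/((j:ℝ)+1)) ≤ ψ (a:ℝ) ω})
                (B ∩ {ω | ENNReal.ofReal (1/((j:ℝ)+1)) ≤ ψ (a:ℝ) ω}ᶜ) :=
              Set.disjoint_left.mpr fun ω hω1 hω2 => absurd hω1.2 hω2.2
            have hBsplit : (B ∩ {ω | ENNReal.ofReal (1/((j:ℝ)+1)) ≤ ψ (a:ℝ) ω})
                ∪ (B ∩ {ω | ENNReal.ofReal (1/((j:ℝ)+1)) ≤ ψ (a:ℝ) ω}ᶜ) = B := by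
              rw [← Set.inter_union_distrib_left, Set.union_compl_self, Set.inter_univ]
            calc ENNReal.ofReal (1/((j:ℝ)+1))
                  * P (B ∩ {ω | ∃ q ∈ insert a S, w ≤ (q:ℝ) ∧ (q:ℝ) < t
                      ∧ ENNReal.ofReal (1/((j:ℝ)+1)) ≤ ψ (q:ℝ) ω})
                ≤ ENNReal.ofReal (1/((j:ℝ)+1))
                    * (P (B ∩ {ω | ENNReal.ofReal (1/((j:ℝ)+1)) ≤ ψ (a:ℝ) ω})
                      + P ((B ∩ {ω | ENNReal.ofReal (1/((j:ℝ)+1)) ≤ ψ (a:ℝ) ω}ᶜ)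
                        ∩ {ω | ∃ q ∈ S, (a:ℝ) ≤ (q:ℝ) ∧ (q:ℝ) < t
                            ∧ ENNReal.ofReal (1/((j:ℝ)+1)) ≤ ψ (q:ℝ) ω})) :=
                  mul_le_mul_right (le_trans (measure_mono hsplit) (measure_union_le _ _)) _
              _ = ENNReal.ofReal (1/((j:ℝ)+1))
                    * P (B ∩ {ω | ENNReal.ofReal (1/((j:ℝ)+1)) ≤ ψ (a:ℝ) ω})
                  + ENNReal.ofReal (1/((j:ℝ)+1))
                    * P ((B ∩ {ω | ENNReal.ofReal (1/((j:ℝ)+1)) ≤ ψ (a:ℝ) ω}ᶜ)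
                      ∩ {ω | ∃ q ∈ S, (a:ℝ) ≤ (q:ℝ) ∧ (q:ℝ) < t
                          ∧ ENNReal.ofReal (1/((j:ℝ)+1)) ≤ ψ (q:ℝ) ω}) := mul_add _ _ _
              _ ≤ (∫⁻ ω in B ∩ {ω | ENNReal.ofReal (1/((j:ℝ)+1)) ≤ ψ (a:ℝ) ω},
                      ψ (a:ℝ) ω ∂P)
                  + ∫⁻ ω in B ∩ {ω | ENNReal.ofReal (1/((j:ℝ)+1)) ≤ ψ (a:ℝ) ω}ᶜ,
                      ψ (a:ℝ) ω ∂P := add_le_add h1 h2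
              _ = ∫⁻ ω in B, ψ (a:ℝ) ω ∂P := by
                  rw [← lintegral_union ((ℱ.le (a:ℝ)) _ hB'meas) hdisj, hBsplit]
              _ ≤ ∫⁻ ω in B, ψ w ω ∂P := hsuper w (a:ℝ) hvw haw1 haw2 B hB
          · have heq : B ∩ {ω | ∃ q ∈ insert a S, w ≤ (q:ℝ) ∧ (q:ℝ) < t
                  ∧ ENNReal.ofReal (1/((j:ℝ)+1)) ≤ ψ (q:ℝ) ω}
                = B ∩ {ω | ∃ q ∈ S, w ≤ (q:ℝ) ∧ (q:ℝ) < t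
                  ∧ ENNReal.ofReal (1/((j:ℝ)+1)) ≤ ψ (q:ℝ) ω} := by
              ext ω
              simp only [Set.mem_inter_iff, Set.mem_setOf_eq, Finset.mem_insert]
              constructor
              · rintro ⟨hωB, q, (rfl | hqS), hq⟩
                · exact absurd ⟨hq.1, hq.2.1⟩ haw
                · exact ⟨hωB, q, hqS, hq⟩
              · rintro ⟨hωB, q, hqS, hq⟩
                exact ⟨hωB, q, Or.inr hqS, hq⟩
            rw [heq]
            exact IH w hvw hwt B hB
      have hcount : ∀ w : ℝ, (v:ℝ) ≤ w → w < t →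
          ENNReal.ofReal (1/((j:ℝ)+1))
              * P {ω | ∃ q : ℚ, w ≤ (q:ℝ) ∧ (q:ℝ) < t
                  ∧ ENNReal.ofReal (1/((j:ℝ)+1)) ≤ ψ (q:ℝ) ω}
            ≤ ∫⁻ ω, ψ w ω ∂P := by
        intro w hvw hwt
        have hdir : Directed (· ⊆ ·) (fun S : Finset ℚ =>
            {ω | ∃ q ∈ S, w ≤ (q:ℝ) ∧ (q:ℝ) < t
              ∧ ENNReal.ofReal (1/((j:ℝ)+1)) ≤ ψ (q:ℝ) ω}) := by
          intro S1 S2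
          refine ⟨S1 ∪ S2, ?_, ?_⟩
          · rintro ω ⟨q, hq, h⟩
            exact ⟨q, Finset.mem_union_left _ hq, h⟩
          · rintro ω ⟨q, hq, h⟩
            exact ⟨q, Finset.mem_union_right _ hq, h⟩
        have hunion : {ω | ∃ q : ℚ, w ≤ (q:ℝ) ∧ (q:ℝ) < t
              ∧ ENNReal.ofReal (1/((j:ℝ)+1)) ≤ ψ (q:ℝ) ω}
            = ⋃ S : Finset ℚ, {ω | ∃ q ∈ S, w ≤ (q:ℝ) ∧ (q:ℝ) < t
                ∧ ENNReal.ofReal (1/((j:ℝ)+1)) ≤ ψ (q:ℝ) ω} := by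
          ext ω
          simp only [Set.mem_setOf_eq, Set.mem_iUnion]
          constructor
          · rintro ⟨q, h⟩
            exact ⟨{q}, q, Finset.mem_singleton_self q, h⟩
          · rintro ⟨S, q, _, h⟩
            exact ⟨q, h⟩
        rw [hunion, hdir.measure_iUnion, ENNReal.mul_iSup]
        refine iSup_le fun S => ?_
        have h := hL S w hvw hwt Set.univ MeasurableSet.univ
        rwa [Set.univ_inter, setLIntegral_univ] at h
      have hZsub : ∀ q0 : ℚ, (v:ℝ) < (q0:ℝ) → (q0:ℝ) < t →
          Z j k v ⊆ {ω | ∃ q : ℚ, (q0:ℝ) ≤ (q:ℝ) ∧ (q:ℝ) < t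
            ∧ ENNReal.ofReal (1/((j:ℝ)+1)) ≤ ψ (q:ℝ) ω} := by
        rintro q0 h1 h2 ω hω
        simp only [hZdef, Set.mem_setOf_eq] at hω
        obtain ⟨-, -, hG, hS⟩ := hω
        obtain ⟨s, hs1, hs2, hs3⟩ := hS q0 h1 h2
        refine ⟨s, hs1, hs2, ?_⟩
        have hωC : ω ∈ C (s:ℝ) := by
          intro q hq1 hq2
          exact hG (q:ℝ) ⟨hq1, le_trans hq2 hs2.le⟩
        simp only [hψdef]
        rw [Set.indicator_of_mem hωC]
        exact ENNReal.ofReal_le_ofReal hs3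
      have hfin : ∀ δ : ℝ≥0∞, 0 < δ →
          ENNReal.ofReal (1/((j:ℝ)+1)) * P (Z j k v) ≤ δ := by
        intro δ hδ
        have hev := (hdual (1/((k:ℝ)+1)) hrpos).eventually_lt_const hδ
        obtain ⟨δ', hδ'pos, hsubs⟩ := Metric.mem_nhdsWithin_iff.mp hev
        obtain ⟨w, hw1, hw2⟩ := exists_rat_btwn (show max (v:ℝ) (t - δ') < t from
          max_lt hvt (by linarith))
        have hwv : (v:ℝ) < (w:ℝ) := lt_of_le_of_lt (le_max_left _ _) hw1
        have hwball : (w:ℝ) ∈ Metric.ball t δ' ∩ Set.Iio t := by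
          constructor
          · rw [Metric.mem_ball, Real.dist_eq, abs_sub_lt_iff]
            have h3 : t - δ' < (w:ℝ) := lt_of_le_of_lt (le_max_right _ _) hw1
            exact ⟨by linarith, by linarith⟩
          · exact hw2
        have hDw := hsubs hwball
        calc ENNReal.ofReal (1/((j:ℝ)+1)) * P (Z j k v)
            ≤ ENNReal.ofReal (1/((j:ℝ)+1))
                * P {ω | ∃ q : ℚ, (w:ℝ) ≤ (q:ℝ) ∧ (q:ℝ) < t
                    ∧ ENNReal.ofReal (1/((j:ℝ)+1)) ≤ ψ (q:ℝ) ω} :=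
              mul_le_mul_right (measure_mono (hZsub w hwv hw2)) _
          _ ≤ ∫⁻ ω, ψ (w:ℝ) ω ∂P := hcount (w:ℝ) hwv.le hw2
          _ ≤ ∫⁻ y in {y : E | 1/((k:ℝ)+1) ≤ dist y z},
                ENNReal.ofReal (p (t - (w:ℝ)) y z) * ENNReal.ofReal (p (w:ℝ) x y) ∂m :=
              hbound w hwv.le hw2
          _ ≤ δ := hDw.le
      have hfin' : ENNReal.ofReal (1/((j:ℝ)+1)) * P (Z j k v) = 0 := by
        by_contra h
        have hne_top : ENNReal.ofReal (1/((j:ℝ)+1)) * P (Z j k v) ≠ ⊤ :=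
          ENNReal.mul_ne_top ENNReal.ofReal_ne_top (measure_ne_top P _)
        exact absurd (hfin _ (ENNReal.half_pos h))
          (not_le.mpr (ENNReal.half_lt_self h hne_top))
      rcases mul_eq_zero.mp hfin' with h | h
      · exact absurd h hε0
      · exact h
    have hZae : ∀ᵐ ω ∂P, ω ∉ ⋃ jkv : ℕ × ℕ × ℚ, Z jkv.1 jkv.2.1 jkv.2.2 := by
      have hZu : P (⋃ jkv : ℕ × ℕ × ℚ, Z jkv.1 jkv.2.1 jkv.2.2) = 0 :=
        measure_iUnion_null fun jkv => hZnull _ _ _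
      rw [ae_iff]
      have hset : {ω | ¬ ω ∉ ⋃ jkv : ℕ × ℕ × ℚ, Z jkv.1 jkv.2.1 jkv.2.2}
          = ⋃ jkv : ℕ × ℕ × ℚ, Z jkv.1 jkv.2.1 jkv.2.2 := by
        ext ω
        simp only [Set.mem_setOf_eq, not_not]
      rw [hset]
      exact hZu
    filter_upwards [hcadlag, hXt', hZae] with ω hcad hne hZω
    by_contra hnot
    rw [Metric.tendsto_nhds] at hnot
    push_neg at hnot
    obtain ⟨ε₀, hε₀, hfreq⟩ := hnot
    have hfreq' : ∃ᶠ u in nhdsWithin t (Set.Iio t),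
        ¬ dist (p (t - u) (X u ω) z) 0 < ε₀ := by
      first
      | exact hfreq
      | exact Filter.not_eventually.mp hfreq
      | exact hfreq.mono fun u hu => not_lt.mpr hu
    obtain ⟨j, hj⟩ := exists_nat_one_div_lt hε₀
    have hdpos : 0 < dist (X t ω) z := dist_pos.mpr hne
    have hconta : ContinuousWithinAt (fun u => dist (X u ω) z) (Set.Icc 0 t) t :=
      ((hX_cont ω) t (Set.right_mem_Icc.mpr ht.le)).dist continuousWithinAt_const
    have hev : ∀ᶠ u in nhdsWithin t (Set.Icc 0 t), dist (X t ω) z / 2 < dist (X u ω) z :=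
      hconta.eventually_const_lt (half_lt_self hdpos)
    obtain ⟨δ', hδ'pos, hδ'⟩ := Metric.mem_nhdsWithin_iff.mp hev
    obtain ⟨v, hv1, hv2⟩ := exists_rat_btwn (show max (t - δ') 0 < t from
      max_lt (by linarith) ht)
    have hv0 : 0 < (v:ℝ) := lt_of_le_of_lt (le_max_right _ _) hv1
    have hvtδ : t - δ' < (v:ℝ) := lt_of_le_of_lt (le_max_left _ _) hv1
    obtain ⟨k, hk⟩ := exists_nat_one_div_lt (half_pos hdpos)
    apply hZω
    refine Set.mem_iUnion.mpr ⟨(j, k, v), ?_⟩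
    simp only [hZdef, Set.mem_setOf_eq]
    refine ⟨hv0, hv2, ?_, ?_⟩
    · intro u hu
      have humem : u ∈ Metric.ball t δ' ∩ Set.Icc 0 t := by
        refine ⟨?_, le_trans hv0.le hu.1, hu.2⟩
        rw [Metric.mem_ball, Real.dist_eq, abs_sub_lt_iff]
        exact ⟨by linarith [hu.2], by linarith [hu.1]⟩
      have hd2 := hδ' humem
      simp only [Set.mem_setOf_eq] at hd2
      linarith [hk, hd2]
    · intro w hw1 hw2
      have hIoo : Set.Ioi (w:ℝ) ∩ Set.Iio t ∈ nhdsWithin t (Set.Iio t) :=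
        Filter.inter_mem (mem_nhdsWithin_of_mem_nhds (Ioi_mem_nhds hw2)) self_mem_nhdsWithin
      obtain ⟨u, hu1, hu2⟩ :=
        (hfreq'.and_eventually (eventually_of_mem hIoo fun u hu => hu)).exists
      have hu0 : 0 < u := lt_trans (lt_trans hv0 hw1) hu2.1
      have hut : u < t := hu2.2
      have hMu : ε₀ ≤ p (t - u) (X u ω) z := by
        have hnn : 0 ≤ p (t - u) (X u ω) z := hp_nonneg _ _ _ (by linarith)
        have h' := not_lt.mp hu1
        rwa [Real.dist_eq, sub_zero, abs_of_nonneg hnn] at h'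
      have hrc := hcad.1 u ⟨hu0.le, hut⟩
      have hev2 : ∀ᶠ s' in nhdsWithin u (Set.Ici u),
          1/((j:ℝ)+1) < p (t - s') (X s' ω) z ∧ s' < t := by
        have h1 := hrc.eventually_const_lt (lt_of_lt_of_le hj hMu)
        have h2 : ∀ᶠ s' in nhdsWithin u (Set.Ici u), s' < t :=
          eventually_of_mem (mem_nhdsWithin_of_mem_nhds (Iio_mem_nhds hut))
            fun s' hs' => hs'
        exact h1.and h2
      obtain ⟨δ'', hδ''pos, hsub2⟩ := Metric.mem_nhdsWithin_iff.mp hev2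
      obtain ⟨s, hs1, hs2⟩ := exists_rat_btwn (show u < min (u + δ'') t from
        lt_min (by linarith) hut)
      have hs2' := lt_min_iff.mp hs2
      have hsmem : (s:ℝ) ∈ Metric.ball u δ'' ∩ Set.Ici u := by
        refine ⟨?_, hs1.le⟩
        rw [Metric.mem_ball, Real.dist_eq, abs_sub_lt_iff]
        exact ⟨by linarith [hs2'.1], by linarith⟩
      obtain ⟨hps, hst'⟩ := hsub2 hsmem
      exact ⟨s, le_of_lt (lt_trans hu2.1 hs1), hst', hps.le⟩
  · -- integrability
    intro s hs hst
    by_cases h : s < t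
    · simp only [if_pos h]
      exact hMint s hs h
    · simp only [if_neg h]
      exact integrable_zero _ _ _
  · -- supermartingale property
    intro s u hs hsu hut
    by_cases hu : u < t
    · have hst : s < t := lt_of_le_of_lt hsu hu
      simp only [if_pos hu, if_pos hst]
      exact (hmart s u hs hsu hu).symm.le
    · simp only [if_neg hu]
      have h0 : P[(fun _ : Ω => (0:ℝ))|ℱ s] = 0 := by
        rw [show (fun _ : Ω => (0:ℝ)) = (0 : Ω → ℝ) from rfl, condExp_zero]
      rw [h0]
      refine Eventually.of_forall fun ω => ?_
      by_cases hst : s < t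
      · simp only [if_pos hst, Pi.zero_apply]
        exact hp_nonneg _ _ _ (by linarith)
      · simp only [if_neg hst, Pi.zero_apply, le_refl]
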